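/- Let 𝒴 and 𝒜 be finite nonempty types, n a positive natural number, and set 𝒰 = 𝒲 = 𝒵 = Fin n. Let Q : 𝒴 × 𝒰 × 𝒲 × 𝒵 × 𝒜 → ℝ be nonnegative with total sum 1 (the joint pmf of (Y,U,W,Z,A)), fix a ∈ 𝒜 and v : 𝒴 → ℝ, and define f_ATE(a) = Σ_u ( Σ_y v(y)·Q_{YUA}(y,u,a)/Q_{UA}(u,a) ) · Q_U(u). Assume the conditional independences (i) Y ⟂ Z | (U,A), (ii) W ⟂ Z | (U,A), (iii) W ⟂ A | U all hold in pmf form, and the positivity conditions Q_A(a) > 0, Q_U(u) > 0 and Q_{UA}(u,a) > 0 for all u, Q_{WA}(w,a) > 0 for all w. Define the square matrices M ∈ ℝ^{𝒵×𝒲} with M[z,w] = Q_{WZA}(w,z,a)/Q_{WA}(w,a) and N ∈ ℝ^{𝒵×𝒰} with N[z,u] = Q_{UZA}(u,z,a)/Q_{UA}(u,a), and assume M and N are invertible. Let P_{YZ|a} ∈ ℝ^{𝒴×𝒵} have entries Q_{YZA}(y,z,a)/Q_A(a) and c ∈ ℝ^{𝒲} have entries c(w) = Q_W(w)/Q_{WA}(w,a).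 Then f_ATE(a) = Q_A(a) · ( vᵀ · P_{YZ|a} · (Mᵀ)⁻¹ · c ). -/

import Mathlib

open Matrix

/-- Identifiability of the dose-response curve in the discrete case:
`f_ATE(a) = Σ_u E[v(Y) | U = u, A = a] · Q_U(u)` equals
`Q_A(a) · ( vᵀ · P(Y,Z|A=a) · P^{-T}(Z|W,A=a) · (1/P(A=a|W)) )` under the proxy conditional
independences, positivity, and invertibility of `M = P(Z|W,A=a)` and `N = P(Z|U,A=a)`. -/
theorem discrete_dose_response_identification
    {𝒴 𝒜 : Type*} [Fintype 𝒴] [Fintype 𝒜] [Nonempty 𝒴] [Nonempty 𝒜]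
    (n : ℕ) (hn : 0 < n)
    (Q : 𝒴 × Fin n × Fin n × Fin n × 𝒜 → ℝ)
    (hQ_nonneg : ∀ x, 0 ≤ Q x)
    (hQ_sum : ∑ y, ∑ u, ∑ w, ∑ z, ∑ a, Q (y, u, w, z, a) = 1)
    (a : 𝒜) (v : 𝒴 → ℝ)
    -- marginal pmfs
    (QU : Fin n → ℝ) (hQU : ∀ u, QU u = ∑ y, ∑ w, ∑ z, ∑ a', Q (y, u, w, z, a'))
    (QW : Fin n → ℝ) (hQW : ∀ w, QW w = ∑ y, ∑ u, ∑ z, ∑ a', Q (y, u, w, z, a'))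
    (QA : 𝒜 → ℝ) (hQA : ∀ a', QA a' = ∑ y, ∑ u, ∑ w, ∑ z, Q (y, u, w, z, a'))
    (QUW : Fin n → Fin n → ℝ) (hQUW : ∀ u w, QUW u w = ∑ y, ∑ z, ∑ a', Q (y, u, w, z, a'))
    (QUA : Fin n → 𝒜 → ℝ) (hQUA : ∀ u a', QUA u a' = ∑ y, ∑ w, ∑ z, Q (y, u, w, z, a'))
    (QWA : Fin n → 𝒜 → ℝ) (hQWA : ∀ w a', QWA w a' = ∑ y, ∑ u, ∑ z, Q (y, u, w, z, a'))
    (QYUA : 𝒴 → Fin n → 𝒜 → ℝ) (hQYUA : ∀ y u a', QYUA y u a' = ∑ w, ∑ z, Q (y, u, w, z, a'))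
    (QUWA : Fin n → Fin n → 𝒜 → ℝ)
    (hQUWA : ∀ u w a', QUWA u w a' = ∑ y, ∑ z, Q (y, u, w, z, a'))
    (QUZA : Fin n → Fin n → 𝒜 → ℝ)
    (hQUZA : ∀ u z a', QUZA u z a' = ∑ y, ∑ w, Q (y, u, w, z, a'))
    (QWZA : Fin n → Fin n → 𝒜 → ℝ)
    (hQWZA : ∀ w z a', QWZA w z a' = ∑ y, ∑ u, Q (y, u, w, z, a'))
    (QYZA : 𝒴 → Fin n → 𝒜 → ℝ) (hQYZA : ∀ y z a', QYZA y z a' = ∑ u, ∑ w, Q (y, u, w, z, a'))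
    (QYUZA : 𝒴 → Fin n → Fin n → 𝒜 → ℝ)
    (hQYUZA : ∀ y u z a', QYUZA y u z a' = ∑ w, Q (y, u, w, z, a'))
    (QUWZA : Fin n → Fin n → Fin n → 𝒜 → ℝ)
    (hQUWZA : ∀ u w z a', QUWZA u w z a' = ∑ y, Q (y, u, w, z, a'))
    -- conditional independences in pmf form
    (ci1 : ∀ y u z a', QYUZA y u z a' * QUA u a' = QYUA y u a' * QUZA u z a')
    (ci2 : ∀ u w z a', QUWZA u w z a' * QUA u a' = QUWA u w a' * QUZA u z a')
    (ci3 : ∀ u w a', QUWA u w a' * QU u = QUW u w * QUA u a')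
    -- positivity conditions
    (hQA_pos : 0 < QA a)
    (hQU_pos : ∀ u, 0 < QU u)
    (hQUA_pos : ∀ u, 0 < QUA u a)
    (hQWA_pos : ∀ w, 0 < QWA w a)
    -- matrices
    (M : Matrix (Fin n) (Fin n) ℝ) (hM : ∀ z w, M z w = QWZA w z a / QWA w a)
    (N : Matrix (Fin n) (Fin n) ℝ) (hN : ∀ z u, N z u = QUZA u z a / QUA u a)
    (hM_inv : IsUnit M) (hN_inv : IsUnit N)
    (PYZ : Matrix 𝒴 (Fin n) ℝ) (hPYZ : ∀ y z, PYZ y z = QYZA y z a / QA a)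
    (c : Fin n → ℝ) (hc : ∀ w, c w = QW w / QWA w a) :
    ∑ u, (∑ y, v y * QYUA y u a / QUA u a) * QU u =
      QA a * (v ⬝ᵥ ((PYZ * (Mᵀ)⁻¹) *ᵥ c)) := by
  classical
  set B : Matrix 𝒴 (Fin n) ℝ := Matrix.of (fun y u => QYUA y u a) with hB
  set D : Matrix (Fin n) (Fin n) ℝ := Matrix.of (fun u w => QUWA u w a / QWA w a) with hD
  set g : Fin n → ℝ := fun u => QU u / QUA u a with hg
  have hMND : M = N * D := by
    ext z w
    rw [hM, Matrix.mul_apply]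
    have h1 : QWZA w z a = ∑ u, QUWZA u w z a := by
      rw [hQWZA]; simp only [hQUWZA]; exact Finset.sum_comm
    rw [h1, Finset.sum_div]
    refine Finset.sum_congr rfl fun u _ => ?_
    rw [hN]
    simp only [hD, Matrix.of_apply]
    have hUA := (hQUA_pos u).ne'
    have hWA := (hQWA_pos w).ne'
    field_simp
    linear_combination ci2 u w z a
  have hPYZ_eq : PYZ = (QA a)⁻¹ • (B * Nᵀ) := by
    ext y z
    rw [hPYZ, Matrix.smul_apply, Matrix.mul_apply]
    have h1 : QYZA y z a = ∑ u, QYUZA y u z a := by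
      rw [hQYZA]; simp only [hQYUZA]
    rw [h1, smul_eq_mul, Finset.mul_sum, Finset.sum_div]
    refine Finset.sum_congr rfl fun u _ => ?_
    rw [Matrix.transpose_apply, hN]
    have hUA := (hQUA_pos u).ne'
    have hQAne := hQA_pos.ne'
    simp only [hB, Matrix.of_apply]
    field_simp
    linear_combination ci1 y u z a
  have hc_eq : c = Dᵀ *ᵥ g := by
    ext w
    rw [hc, Matrix.mulVec, dotProduct]
    have h1 : QW w = ∑ u, QUW u w := by
      rw [hQW]; simp only [hQUW]; exact Finset.sum_comm
    rw [h1, Finset.sum_div]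
    refine Finset.sum_congr rfl fun u _ => ?_
    rw [Matrix.transpose_apply]
    simp only [hD, hg, Matrix.of_apply]
    have hUA := (hQUA_pos u).ne'
    have hWA := (hQWA_pos w).ne'
    have hU := (hQU_pos u).ne'
    field_simp
    linear_combination (-1) * ci3 u w a
  have hMdet : IsUnit M.det := (Matrix.isUnit_iff_isUnit_det M).mp hM_inv
  have hNdet : IsUnit N.det := (Matrix.isUnit_iff_isUnit_det N).mp hN_inv
  have hDdet : IsUnit D.det := by
    have h := congrArg Matrix.det hMND
    rw [Matrix.det_mul] at h
    rw [isUnit_iff_ne_zero] at *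
    intro h0
    exact hMdet (by rw [h, h0, mul_zero])
  have hNTdet : IsUnit (Nᵀ).det := by rwa [Matrix.det_transpose]
  have hDTdet : IsUnit (Dᵀ).det := by rwa [Matrix.det_transpose]
  have hMT_inv : (Mᵀ)⁻¹ = (Nᵀ)⁻¹ * (Dᵀ)⁻¹ := by
    rw [hMND, Matrix.transpose_mul, Matrix.mul_inv_rev]
  have key : PYZ * (Mᵀ)⁻¹ = (QA a)⁻¹ • (B * (Dᵀ)⁻¹) := by
    rw [hPYZ_eq, hMT_inv, Matrix.smul_mul]
    congr 1
    rw [Matrix.mul_assoc, ← Matrix.mul_assoc Nᵀ, Matrix.mul_nonsing_inv _ hNTdet,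
      Matrix.one_mul]
  have key2 : (PYZ * (Mᵀ)⁻¹) *ᵥ c = (QA a)⁻¹ • (B *ᵥ g) := by
    rw [key, hc_eq, Matrix.smul_mulVec, Matrix.mulVec_mulVec,
      Matrix.mul_assoc, Matrix.nonsing_inv_mul _ hDTdet, Matrix.mul_one]
  rw [key2, dotProduct_smul, smul_eq_mul, ← mul_assoc,
    mul_inv_cancel₀ hQA_pos.ne', one_mul]
  simp only [dotProduct, Matrix.mulVec, Finset.mul_sum]
  rw [Finset.sum_comm]
  refine Finset.sum_congr rfl fun u _ => ?_
  rw [Finset.sum_mul]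
  refine Finset.sum_congr rfl fun y _ => ?_
  simp only [hB, hg, Matrix.of_apply]
  ring
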